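/- For every non-redundant discrete loss ℓ : ℛ → ℝ^𝒴 there exists a polyhedral loss L : ℝ^n → ℝ^𝒴, n = |𝒴|, with all components nonnegative, such that L embeds ℓ. -/

import Mathlib

/-- The probability simplex over a finite outcome set `Y`. -/
def probSimplex (Y : Type*) [Fintype Y] : Set (Y → ℝ) :=
  {p | (∀ y, 0 ≤ p y) ∧ ∑ y, p y = 1}

/-- Expected loss `⟨p, v⟩ = ∑ y, p y * v y`. -/
def elloss {Y : Type*} [Fintype Y] (p : Y → ℝ) (v : Y → ℝ) : ℝ :=
  ∑ y, p y * v y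

/-- `u` minimizes the expected loss `⟨p, L ·⟩` over the report set. -/
def Minimizes {U Y : Type*} [Fintype Y] (p : Y → ℝ) (L : U → Y → ℝ) (u : U) : Prop :=
  ∀ u' : U, elloss p (L u) ≤ elloss p (L u')

/-- The Bayes risk `inf_u ⟨p, L u⟩`. -/
noncomputable def bayesRisk {U Y : Type*} [Fintype Y] (p : Y → ℝ) (L : U → Y → ℝ) : ℝ :=
  sInf (Set.range fun u => elloss p (L u))

/-- `L` embeds the discrete loss `ℓ`. -/
def Embeds {R Y : Type*} [Fintype Y] {d : ℕ}
    (L : (Fin d → ℝ) → Y → ℝ) (ℓ : R → Y → ℝ) : Prop :=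
  ∃ φ : R → (Fin d → ℝ), Function.Injective φ ∧ (∀ r, L (φ r) = ℓ r) ∧
    ∀ p ∈ probSimplex Y, ∀ r, Minimizes p ℓ r ↔ Minimizes p L (φ r)

/-- A polyhedral convex function: a pointwise maximum of finitely many affine functions. -/
def IsPolyhedralFn {d : ℕ} (g : (Fin d → ℝ) → ℝ) : Prop :=
  ∃ (m : ℕ) (a : Fin (m + 1) → Fin d → ℝ) (b : Fin (m + 1) → ℝ),
    ∀ x, g x = Finset.univ.sup' Finset.univ_nonempty (fun i => ∑ j, a i j * x j + b i)

section Aux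

variable {Y R : Type*} [Fintype Y] [Fintype R]

lemma elloss_comb (a b : ℝ) (x z v : Y → ℝ) :
    elloss (a • x + b • z) v = a * elloss x v + b * elloss z v := by
  unfold elloss
  rw [Finset.mul_sum, Finset.mul_sum, ← Finset.sum_add_distrib]
  exact Finset.sum_congr rfl fun y _ => by
    simp only [Pi.add_apply, Pi.smul_apply, smul_eq_mul]; ring

lemma elloss_add_smul (x d v : Y → ℝ) (c : ℝ) :
    elloss (x + c • d) v = elloss x v + c * elloss d v := by
  unfold elloss
  rw [Finset.mul_sum, ← Finset.sum_add_distrib]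
  exact Finset.sum_congr rfl fun y _ => by
    simp only [Pi.add_apply, Pi.smul_apply, smul_eq_mul]; ring

lemma elloss_cont (v : Y → ℝ) : Continuous fun x : Y → ℝ => elloss x v := by
  unfold elloss
  exact continuous_finset_sum _ fun y _ => (continuous_apply y).mul continuous_const

/-- The cell of distributions (here: of all vectors) where report `r` is Bayes-optimal. -/
def cellSet (ℓ : R → Y → ℝ) (r : R) : Set (Y → ℝ) :=
  {x | (∀ y, 0 ≤ x y) ∧ (∑ y, x y = 1) ∧ ∀ r', elloss x (ℓ r) ≤ elloss x (ℓ r')}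

lemma cell_isCompact (ℓ : R → Y → ℝ) (r : R) : IsCompact (cellSet ℓ r) := by
  have hclosed : IsClosed (cellSet ℓ r) := by
    have : cellSet ℓ r = (⋂ y, {x : Y → ℝ | 0 ≤ x y}) ∩
        (({x : Y → ℝ | ∑ y, x y = 1}) ∩
          ⋂ r', {x : Y → ℝ | elloss x (ℓ r) ≤ elloss x (ℓ r')}) := by
      ext x
      simp only [cellSet, Set.mem_setOf_eq, Set.mem_inter_iff, Set.mem_iInter]
    rw [this]
    refine IsClosed.inter (isClosed_iInter fun y =>
        isClosed_le continuous_const (continuous_apply y)) (IsClosed.inter ?_ ?_)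
    · exact isClosed_eq (continuous_finset_sum _ fun y _ => continuous_apply y) continuous_const
    · exact isClosed_iInter fun r' => isClosed_le (elloss_cont _) (elloss_cont _)
  refine Metric.isCompact_of_isClosed_isBounded hclosed ?_
  refine (Metric.isBounded_closedBall (x := (0 : Y → ℝ)) (r := 1)).subset ?_
  intro x hx
  rw [Metric.mem_closedBall, dist_zero_right]
  rw [pi_norm_le_iff_of_nonneg zero_le_one]
  intro y
  rw [Real.norm_eq_abs, abs_le]
  constructor
  · linarith [hx.1 y]
  · calc x y ≤ ∑ y', x y' := Finset.single_le_sum (fun i _ => hx.1 i) (Finset.mem_univ y)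
    _ = 1 := hx.2.1

lemma cell_convex (ℓ : R → Y → ℝ) (r : R) : Convex ℝ (cellSet ℓ r) := by
  intro x hx z hz a b ha hb hab
  refine ⟨fun y => ?_, ?_, fun r' => ?_⟩
  · have := hx.1 y; have := hz.1 y
    simp only [Pi.add_apply, Pi.smul_apply, smul_eq_mul]
    nlinarith
  · simp only [Pi.add_apply, Pi.smul_apply, smul_eq_mul]
    rw [Finset.sum_add_distrib, ← Finset.mul_sum, ← Finset.mul_sum, hx.2.1, hz.2.1]
    linarith
  · rw [elloss_comb, elloss_comb]
    have h1 := hx.2.2 r'; have h2 := hz.2.2 r'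
    nlinarith

/-- The constraint functionals defining the cell. -/
def fval (ℓ : R → Y → ℝ) (r : R) : (Y ⊕ R) → (Y → ℝ) → ℝ
  | Sum.inl y0 => fun x => x y0
  | Sum.inr r' => fun x => elloss x (ℓ r') - elloss x (ℓ r)

lemma fval_add_smul (ℓ : R → Y → ℝ) (r : R) (j : Y ⊕ R) (x d : Y → ℝ) (c : ℝ) :
    fval ℓ r j (x + c • d) = fval ℓ r j x + c * fval ℓ r j d := by
  cases j with
  | inl y0 => simp [fval, Pi.add_apply, Pi.smul_apply, smul_eq_mul]
  | inr r' => simp only [fval, elloss_add_smul]; ring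

lemma mem_cell_iff (ℓ : R → Y → ℝ) (r : R) (x : Y → ℝ) :
    x ∈ cellSet ℓ r ↔ (∑ y, x y = 1) ∧ ∀ j, 0 ≤ fval ℓ r j x := by
  constructor
  · rintro ⟨h1, h2, h3⟩
    refine ⟨h2, fun j => ?_⟩
    cases j with
    | inl y0 => exact h1 y0
    | inr r' => simpa [fval] using h3 r'
  · rintro ⟨h1, h2⟩
    refine ⟨fun y => h2 (Sum.inl y), h1, fun r' => ?_⟩
    have := h2 (Sum.inr r')
    simp only [fval] at this
    linarith

lemma cell_extremePoints_finite [Nonempty Y] (ℓ : R → Y → ℝ) (r : R) :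
    ((cellSet ℓ r).extremePoints ℝ).Finite := by
  classical
  have hinj : Set.InjOn (fun x => {j : Y ⊕ R | fval ℓ r j x = 0})
      ((cellSet ℓ r).extremePoints ℝ) := by
    intro x hx x' hx' hS
    by_contra hne
    set d : Y → ℝ := x' - x with hd
    have hd0 : d ≠ 0 := by
      intro h
      apply hne
      have : x' = x + d := by simp [hd]
      rw [this, h]; simp
    have hxc : x ∈ cellSet ℓ r := extremePoints_subset hx
    have hxc' : x' ∈ cellSet ℓ r := extremePoints_subset hx'
    have hfd : ∀ j, fval ℓ r j x = 0 → fval ℓ r j d = 0 := by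
      intro j hj
      have hj' : fval ℓ r j x' = 0 := by
        have := (Set.ext_iff.mp hS j).mp hj
        exact this
      have hx'd : x' = x + (1:ℝ) • d := by simp [hd]
      have := fval_add_smul ℓ r j x d 1
      rw [← hx'd, hj', hj] at this
      linarith
    have hsumd : ∑ y, d y = 0 := by
      have h1 := ((mem_cell_iff ℓ r x).mp hxc).1
      have h2 := ((mem_cell_iff ℓ r x').mp hxc').1
      simp only [hd, Pi.sub_apply, Finset.sum_sub_distrib, h1, h2, sub_self]
    -- positive step size
    set ε : ℝ := Finset.univ.inf' Finset.univ_nonempty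
      (fun j : Y ⊕ R => if fval ℓ r j x = 0 then 1 else fval ℓ r j x / (|fval ℓ r j d| + 1))
      with hε
    have hεpos : 0 < ε := by
      rw [hε, Finset.lt_inf'_iff]
      intro j _
      by_cases h : fval ℓ r j x = 0
      · simp [h]
      · rw [if_neg h]
        have h0 : 0 ≤ fval ℓ r j x := ((mem_cell_iff ℓ r x).mp hxc).2 j
        have : 0 < fval ℓ r j x := lt_of_le_of_ne h0 (Ne.symm h)
        positivity
    have hmem : ∀ c : ℝ, |c| ≤ ε → x + c • d ∈ cellSet ℓ r := by
      intro c hc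
      rw [mem_cell_iff]
      constructor
      · simp only [Pi.add_apply, Pi.smul_apply, smul_eq_mul, Finset.sum_add_distrib,
          ← Finset.mul_sum, hsumd, mul_zero, add_zero]
        exact ((mem_cell_iff ℓ r x).mp hxc).1
      · intro j
        rw [fval_add_smul]
        by_cases h : fval ℓ r j x = 0
        · rw [h, hfd j h, mul_zero, add_zero]
        · have h0 : 0 ≤ fval ℓ r j x := ((mem_cell_iff ℓ r x).mp hxc).2 j
          have hpos : 0 < fval ℓ r j x := lt_of_le_of_ne h0 (Ne.symm h)
          have hεle : ε ≤ fval ℓ r j x / (|fval ℓ r j d| + 1) := by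
            rw [hε]
            have := Finset.inf'_le
              (fun j : Y ⊕ R => if fval ℓ r j x = 0 then 1
                else fval ℓ r j x / (|fval ℓ r j d| + 1)) (Finset.mem_univ j)
            rwa [if_neg h] at this
          have habs : |c * fval ℓ r j d| < fval ℓ r j x := by
            rw [abs_mul]
            have h1 : |c| ≤ fval ℓ r j x / (|fval ℓ r j d| + 1) := le_trans hc hεle
            have h2 : 0 ≤ |fval ℓ r j d| := abs_nonneg _
            have h3 : 0 < |fval ℓ r j d| + 1 := by linarith
            have h4 : fval ℓ r j x / (|fval ℓ r j d| + 1) * (|fval ℓ r j d| + 1)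
                = fval ℓ r j x := div_mul_cancel₀ _ (ne_of_gt h3)
            nlinarith [abs_nonneg c]
          have := abs_lt.mp habs
          linarith
    have h1 : x + ε • d ∈ cellSet ℓ r := hmem ε (by rw [abs_of_pos hεpos])
    have h2 : x + (-ε) • d ∈ cellSet ℓ r := hmem (-ε) (by rw [abs_neg, abs_of_pos hεpos])
    have hop : x ∈ openSegment ℝ (x + (-ε) • d) (x + ε • d) := by
      refine ⟨1/2, 1/2, by norm_num, by norm_num, by norm_num, ?_⟩
      module
    have := ((mem_extremePoints).mp hx).2 _ h2 _ h1 hop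
    have h3 : x + (-ε) • d = x := this.1
    have : (-ε) • d = 0 := by
      have := congrArg (fun z => z - x) h3
      simpa [add_sub_cancel_left] using this
    rcases smul_eq_zero.mp this with h | h
    · exact absurd h (by simpa using ne_of_gt hεpos)
    · exact hd0 h
  exact Set.Finite.of_finite_image (Set.toFinite _) hinj

lemma cell_eq_hull [Nonempty Y] (ℓ : R → Y → ℝ) (r : R) :
    cellSet ℓ r = convexHull ℝ ((cellSet ℓ r).extremePoints ℝ) := by
  calc cellSet ℓ r = closure (convexHull ℝ ((cellSet ℓ r).extremePoints ℝ)) :=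
        (closure_convexHull_extremePoints (cell_isCompact ℓ r) (cell_convex ℓ r)).symm
    _ = convexHull ℝ ((cellSet ℓ r).extremePoints ℝ) :=
        (show IsClosed (convexHull ℝ ((cellSet ℓ r).extremePoints ℝ)) from
          Set.Finite.isClosed_convexHull (𝕜 := ℝ) (cell_extremePoints_finite ℓ r)).closure_eq

end Aux

section Cover

variable {Y R : Type*} [Fintype Y] [Fintype R]

noncomputable def Binf [Nonempty R] (ℓ : R → Y → ℝ) (x : Y → ℝ) : ℝ :=
  Finset.univ.inf' Finset.univ_nonempty (fun r => elloss x (ℓ r))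

lemma Binf_le [Nonempty R] (ℓ : R → Y → ℝ) (x : Y → ℝ) (r : R) :
    Binf ℓ x ≤ elloss x (ℓ r) :=
  Finset.inf'_le _ (Finset.mem_univ r)

lemma Binf_eq_of_cell [Nonempty R] (ℓ : R → Y → ℝ) (r : R) (x : Y → ℝ)
    (hx : x ∈ cellSet ℓ r) : Binf ℓ x = elloss x (ℓ r) :=
  le_antisymm (Binf_le ℓ x r) (Finset.le_inf' _ _ fun r' _ => hx.2.2 r')

lemma coverage [Nonempty Y] [Nonempty R] (ℓ : R → Y → ℝ) :
    ∃ Q : Finset (Y → ℝ), ∀ (u : Y → ℝ), ∀ p ∈ probSimplex Y, ∃ q ∈ Q,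
      Binf ℓ p - elloss p u ≤ Binf ℓ q - elloss q u := by
  classical
  refine ⟨Finset.univ.biUnion (fun r => (cell_extremePoints_finite ℓ r).toFinset),
    fun u p hp => ?_⟩
  obtain ⟨r, -, hr⟩ := Finset.exists_mem_eq_inf' (Finset.univ_nonempty (α := R))
    (fun r => elloss p (ℓ r))
  have hpcell : p ∈ cellSet ℓ r := by
    refine ⟨hp.1, hp.2, fun r' => ?_⟩
    rw [← hr]
    exact Finset.inf'_le _ (Finset.mem_univ r')
  have hhull : p ∈ convexHull ℝ ((cellSet ℓ r).extremePoints ℝ) :=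
    (cell_eq_hull ℓ r) ▸ hpcell
  set E : Finset (Y → ℝ) := (cell_extremePoints_finite ℓ r).toFinset with hE
  have hEne : E.Nonempty := by
    rcases Set.eq_empty_or_nonempty ((cellSet ℓ r).extremePoints ℝ) with h | h
    · rw [h, convexHull_empty] at hhull; exact absurd hhull (Set.notMem_empty p)
    · exact (Set.Finite.toFinset_nonempty _).mpr h
  set G : (Y → ℝ) → ℝ := fun x => elloss x (ℓ r) - elloss x u with hG
  obtain ⟨q, hqE, hq⟩ := Finset.exists_mem_eq_sup' hEne G
  have hbound : convexHull ℝ ((cellSet ℓ r).extremePoints ℝ) ⊆ {x | G x ≤ E.sup' hEne G} := by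
    apply convexHull_min
    · intro x hx
      exact Finset.le_sup' G ((Set.Finite.mem_toFinset _).mpr hx)
    · intro x hx z hz a b ha hb hab
      have hGxz : G (a • x + b • z) = a * G x + b * G z := by
        simp only [hG, elloss_comb]; ring
      simp only [Set.mem_setOf_eq] at hx hz ⊢
      rw [hGxz]
      have hM : a * (E.sup' hEne G) + b * (E.sup' hEne G) = E.sup' hEne G := by
        rw [← add_mul, hab, one_mul]
      linarith [mul_le_mul_of_nonneg_left hx ha, mul_le_mul_of_nonneg_left hz hb]
  have h1 : G p ≤ G q := by
    have := hbound hhull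
    rwa [Set.mem_setOf_eq, hq] at this
  have hqcell : q ∈ cellSet ℓ r :=
    extremePoints_subset ((Set.Finite.mem_toFinset _).mp hqE)
  refine ⟨q, Finset.mem_biUnion.mpr ⟨r, Finset.mem_univ r, hqE⟩, ?_⟩
  have hb1 : Binf ℓ p = elloss p (ℓ r) := Binf_eq_of_cell ℓ r p hpcell
  have hb2 : Binf ℓ q = elloss q (ℓ r) := Binf_eq_of_cell ℓ r q hqcell
  rw [hb1, hb2]
  simpa [hG] using h1

/-- Enumerated family: point masses plus the coverage set. -/
lemma exists_family [Nonempty Y] [Nonempty R] [DecidableEq Y] (ℓ : R → Y → ℝ) :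
    ∃ (M : ℕ) (qq : Fin M → Y → ℝ),
      (∀ y0 : Y, ∃ i, qq i = fun y => if y = y0 then (1:ℝ) else 0) ∧
      (∀ (u : Y → ℝ), ∀ p ∈ probSimplex Y, ∃ i,
        Binf ℓ p - elloss p u ≤ Binf ℓ (qq i) - elloss (qq i) u) := by
  classical
  obtain ⟨Q, hQ⟩ := coverage ℓ
  set Q' : Finset (Y → ℝ) :=
    Q ∪ Finset.univ.image (fun y0 : Y => fun y => if y = y0 then (1:ℝ) else 0) with hQ'
  have hget : ∀ q ∈ Q', ∃ i : Fin Q'.toList.length, Q'.toList.get i = q := by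
    intro q hq
    exact List.mem_iff_get.mp (Finset.mem_toList.mpr hq)
  refine ⟨Q'.toList.length, fun i => Q'.toList.get i, ?_, ?_⟩
  · intro y0
    apply hget
    rw [hQ']
    exact Finset.mem_union_right _ (Finset.mem_image.mpr ⟨y0, Finset.mem_univ y0, rfl⟩)
  · intro u p hp
    obtain ⟨q, hqQ, hle⟩ := hQ u p hp
    obtain ⟨i, hi⟩ := hget q (Finset.mem_union_left _ hqQ)
    exact ⟨i, by simpa only [hi] using hle⟩

lemma const_add_sup' {ι : Type*} (s : Finset ι) (H : s.Nonempty) (f : ι → ℝ) (c : ℝ) :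
    s.sup' H (fun i => c + f i) = c + s.sup' H f := by
  apply le_antisymm
  · exact Finset.sup'_le _ _ fun i hi => add_le_add_right (Finset.le_sup' f hi) c
  · obtain ⟨i, hi, hEq⟩ := Finset.exists_mem_eq_sup' H f
    rw [hEq]
    exact Finset.le_sup' (fun i => c + f i) hi

end Cover

section Main

variable {Y R : Type*} [Fintype Y] [Fintype R]

lemma Binf_eq_of_forall [Nonempty R] (ℓ : R → Y → ℝ) (p : Y → ℝ) (r : R)
    (h : ∀ r', elloss p (ℓ r) ≤ elloss p (ℓ r')) : Binf ℓ p = elloss p (ℓ r) :=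
  le_antisymm (Binf_le ℓ p r) (Finset.le_inf' _ _ fun r' _ => h r')

lemma main_case [Nonempty Y] [Nonempty R] [DecidableEq Y]
    (ℓ : R → Y → ℝ) (hℓ0 : ∀ r y, 0 ≤ ℓ r y)
    (hnonred : ∀ r : R, ∃ p ∈ probSimplex Y,
      ∀ r' : R, r' ≠ r → elloss p (ℓ r) < elloss p (ℓ r')) :
    ∃ L : (Fin (Fintype.card Y) → ℝ) → Y → ℝ,
      (∀ u y, 0 ≤ L u y) ∧ (∀ y, IsPolyhedralFn (fun u => L u y)) ∧ Embeds L ℓ := by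
  classical
  obtain ⟨M, qq, hδ, hcov⟩ := exists_family ℓ
  set e : Y ≃ Fin (Fintype.card Y) := Fintype.equivFin Y with he
  set cf : Fin (M+1) → Fin (Fintype.card Y) → ℝ :=
    fun i j => if h : (i : ℕ) < M then -(qq ⟨(i:ℕ), h⟩ (e.symm j)) else 0 with hcf
  set bf : Fin (M+1) → ℝ :=
    fun i => if h : (i : ℕ) < M then Binf ℓ (qq ⟨(i:ℕ), h⟩) else 0 with hbf
  set t : (Fin (Fintype.card Y) → ℝ) → ℝ :=
    fun u => Finset.univ.sup' Finset.univ_nonempty (fun i => ∑ j, cf i j * u j + bf i) with ht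
  have elloss_hat : ∀ (q : Y → ℝ) (u : Fin (Fintype.card Y) → ℝ),
      elloss q (fun y => u (e y)) = ∑ j, q (e.symm j) * u j := by
    intro q u
    simp only [elloss]
    exact Fintype.sum_equiv e _ _ (fun y => by simp)
  have piece_last : ∀ u : Fin (Fintype.card Y) → ℝ,
      (∑ j, cf (Fin.last M) j * u j + bf (Fin.last M)) = 0 := by
    intro u
    have h : ¬((Fin.last M : ℕ) < M) := by simp
    simp [hcf, hbf, h]
  have piece_lt : ∀ (k : Fin M) (u : Fin (Fintype.card Y) → ℝ),
      (∑ j, cf k.castSucc j * u j + bf k.castSucc)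
        = Binf ℓ (qq k) - elloss (qq k) (fun y => u (e y)) := by
    intro k u
    have h : ((k.castSucc : Fin (M+1)) : ℕ) < M := by simp [k.isLt]
    have hk : (⟨((k.castSucc : Fin (M+1)) : ℕ), h⟩ : Fin M) = k := Fin.ext (by simp)
    simp only [hcf, hbf, dif_pos h, hk]
    rw [elloss_hat]
    have hneg : ∑ j, -(qq k (e.symm j)) * u j = -∑ j, qq k (e.symm j) * u j := by
      rw [← Finset.sum_neg_distrib]
      exact Finset.sum_congr rfl fun _ _ => by ring
    rw [hneg]; ring
  have t_nonneg : ∀ u, 0 ≤ t u := by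
    intro u
    have h := Finset.le_sup' (fun i => ∑ j, cf i j * u j + bf i)
      (Finset.mem_univ (Fin.last M))
    rw [piece_last] at h
    exact h
  have t_ge : ∀ (k : Fin M) (u : Fin (Fintype.card Y) → ℝ),
      Binf ℓ (qq k) - elloss (qq k) (fun y => u (e y)) ≤ t u := by
    intro k u
    have h := Finset.le_sup' (fun i => ∑ j, cf i j * u j + bf i)
      (Finset.mem_univ k.castSucc)
    rwa [piece_lt] at h
  have t_at : ∀ r : R, t (fun j => ℓ r (e.symm j)) = 0 := by
    intro r
    apply le_antisymm
    · apply Finset.sup'_le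
      intro i _
      by_cases h : (i : ℕ) < M
      · have hi : i = (⟨(i:ℕ), h⟩ : Fin M).castSucc := Fin.ext (by simp)
        rw [hi, piece_lt]
        have hℓr : elloss (qq ⟨(i:ℕ), h⟩)
            (fun y => (fun j => ℓ r (e.symm j)) (e y)) = elloss (qq ⟨(i:ℕ), h⟩) (ℓ r) := by
          congr 1
          funext y
          simp
        rw [hℓr]
        have := Binf_le ℓ (qq ⟨(i:ℕ), h⟩) r
        linarith
      · have hi : i = Fin.last M := Fin.ext (by
          have := i.isLt
          rw [Fin.val_last]
          omega)
        rw [hi, piece_last]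
    · exact t_nonneg _
  refine ⟨fun u y => u (e y) + t u, ?_, ?_, ?_⟩
  · -- nonnegativity
    intro u y
    show 0 ≤ u (e y) + t u
    obtain ⟨i, hi⟩ := hδ y
    have h1 := t_ge i u
    have h2 : elloss (qq i) (fun y' => u (e y')) = u (e y) := by
      rw [hi]
      simp [elloss, ite_mul]
    have h3 : 0 ≤ Binf ℓ (qq i) := by
      apply Finset.le_inf'
      intro r _
      have : elloss (qq i) (ℓ r) = ℓ r y := by
        rw [hi]; simp [elloss, ite_mul]
      rw [this]
      exact hℓ0 r y
    rw [h2] at h1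
    linarith
  · -- polyhedrality
    intro y
    refine ⟨M, fun i j => (if j = e y then 1 else 0) + cf i j, bf, fun u => ?_⟩
    have hsum : ∀ i : Fin (M+1), ∑ j, ((if j = e y then 1 else 0) + cf i j) * u j
        = u (e y) + ∑ j, cf i j * u j := by
      intro i
      simp only [add_mul, Finset.sum_add_distrib, ite_mul, one_mul, zero_mul]
      congr 1
      simp
    show u (e y) + t u = _
    rw [ht]
    rw [← const_add_sup' _ _ _ (u (e y))]
    apply Finset.sup'_congr _ rfl
    intro i _
    rw [hsum i]
    ring
  · -- Embeds
    refine ⟨fun r => fun j => ℓ r (e.symm j), ?_, ?_, ?_⟩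
    · intro r r' h
      have hℓeq : ℓ r = ℓ r' := by
        funext y
        have := congrFun h (e y)
        simpa using this
      by_contra hne
      obtain ⟨p, hp, hlt⟩ := hnonred r
      have hx := hlt r' (Ne.symm hne)
      rw [hℓeq] at hx
      exact lt_irrefl _ hx
    · intro r
      funext y
      show (fun j => ℓ r (e.symm j)) (e y) + t (fun j => ℓ r (e.symm j)) = ℓ r y
      rw [t_at r]
      simp
    · intro p hp r
      have hLφ : ∀ r'' : R, (fun y => ℓ r'' (e.symm (e y))
          + t (fun j => ℓ r'' (e.symm j))) = ℓ r'' := by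
        intro r''
        funext y
        rw [t_at r'']
        simp
      have hL : ∀ u : Fin (Fintype.card Y) → ℝ,
          elloss p (fun y => u (e y) + t u) = elloss p (fun y => u (e y)) + t u := by
        intro u
        simp only [elloss]
        rw [Finset.sum_congr rfl (fun y _ => mul_add (p y) (u (e y)) (t u)),
          Finset.sum_add_distrib, ← Finset.sum_mul, hp.2, one_mul]
      constructor
      · intro hmin u
        beta_reduce
        rw [hLφ r, hL u]
        have h1 : Binf ℓ p = elloss p (ℓ r) := Binf_eq_of_forall ℓ p r (fun r' => hmin r')
        obtain ⟨i, hcovi⟩ := hcov (fun y => u (e y)) p hp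
        have h2 := t_ge i u
        linarith
      · intro hmin r'
        have h := hmin (fun j => ℓ r' (e.symm j))
        beta_reduce at h
        rwa [hLφ r, hLφ r'] at h

end Main

theorem discrete_loss_embedded_by_polyhedral
    {Y R : Type*} [Fintype Y] [Fintype R]
    (ℓ : R → Y → ℝ) (hℓ0 : ∀ r y, 0 ≤ ℓ r y)
    (hnonred : ∀ r : R, ∃ p ∈ probSimplex Y,
      ∀ r' : R, r' ≠ r → elloss p (ℓ r) < elloss p (ℓ r')) :
    ∃ L : (Fin (Fintype.card Y) → ℝ) → Y → ℝ,
      (∀ u y, 0 ≤ L u y) ∧ (∀ y, IsPolyhedralFn (fun u => L u y)) ∧ Embeds L ℓ := by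
  classical
  rcases isEmpty_or_nonempty R with hR | hR
  · refine ⟨fun u y => 0, fun u y => le_refl 0, fun y => ⟨0, fun _ _ => 0, fun _ => 0,
      fun x => ?_⟩, ?_⟩
    · simp
    · exact ⟨fun r => isEmptyElim r, fun a => isEmptyElim a, fun r => isEmptyElim r,
        fun p hp r => isEmptyElim r⟩
  · have hY : Nonempty Y := by
      rcases isEmpty_or_nonempty Y with hY | hY
      · obtain ⟨p, hp, -⟩ := hnonred (Classical.arbitrary R)
        have h := hp.2
        rw [Finset.univ_eq_empty, Finset.sum_empty] at h
        exact absurd h (by norm_num)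
      · exact hY
    exact main_case ℓ hℓ0 hnonred
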